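/- Let f : ℝ² → ℝ be defined by f(x,y) = (e^x + e^{-x²})·y²·(2 - y²) - e^{-x²} + 1. Then f is differentiable on ℝ², and its gradient vanishes at a point (x,y) if and only if (x,y) = (0,0). -/

import Mathlib

open Real

noncomputable def Lmap (x y : ℝ) : ℝ × ℝ →L[ℝ] ℝ :=
  ((exp x - 2*x*exp (-x^2)) * (2*y^2 - y^4) + 2*x*exp (-x^2)) • ContinuousLinearMap.fst ℝ ℝ ℝ
  + ((exp x + exp (-x^2)) * (4*y - 4*y^3)) • ContinuousLinearMap.snd ℝ ℝ ℝ

lemma key (x y : ℝ) :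
    HasFDerivAt (fun p : ℝ × ℝ =>
      (exp p.1 + exp (-p.1 ^ 2)) * p.2 ^ 2 * (2 - p.2 ^ 2) - exp (-p.1 ^ 2) + 1)
      (Lmap x y) (x, y) := by
  have hfst : HasFDerivAt (fun p : ℝ × ℝ => p.1) (ContinuousLinearMap.fst ℝ ℝ ℝ) (x, y) :=
    hasFDerivAt_fst
  have hsnd : HasFDerivAt (fun p : ℝ × ℝ => p.2) (ContinuousLinearMap.snd ℝ ℝ ℝ) (x, y) :=
    hasFDerivAt_snd
  have h1 : HasDerivAt (fun t : ℝ => exp t) (exp x) x := Real.hasDerivAt_exp x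
  have h2 : HasDerivAt (fun t : ℝ => exp (-t^2)) (-(2*x) * exp (-x^2)) x := by
    have hq : HasDerivAt (fun t : ℝ => -t^2) (-(2*x)) x := by
      have := (hasDerivAt_pow 2 x).neg
      exact this.congr_deriv (by norm_num)
    have hc := (Real.hasDerivAt_exp (-x^2)).comp x hq
    exact hc.congr_deriv (by ring)
  have h3 : HasDerivAt (fun t : ℝ => 2*t^2 - t^4) (4*y - 4*y^3) y := by
    have := ((hasDerivAt_pow 2 y).const_mul 2).sub (hasDerivAt_pow 4 y)
    exact this.congr_deriv (by norm_num <;> ring)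
  have H1 : HasFDerivAt (fun p : ℝ × ℝ => exp p.1)
      ((exp x) • ContinuousLinearMap.fst ℝ ℝ ℝ) (x, y) :=
    h1.comp_hasFDerivAt (f := fun p : ℝ × ℝ => p.1) (x, y) hfst
  have H2 : HasFDerivAt (fun p : ℝ × ℝ => exp (-p.1^2))
      ((-(2*x) * exp (-x^2)) • ContinuousLinearMap.fst ℝ ℝ ℝ) (x, y) :=
    h2.comp_hasFDerivAt (f := fun p : ℝ × ℝ => p.1) (x, y) hfst
  have H3 : HasFDerivAt (fun p : ℝ × ℝ => 2*p.2^2 - p.2^4)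
      ((4*y - 4*y^3) • ContinuousLinearMap.snd ℝ ℝ ℝ) (x, y) :=
    h3.comp_hasFDerivAt (f := fun p : ℝ × ℝ => p.2) (x, y) hsnd
  have Hu := H1.add H2
  have Hmul := Hu.mul H3
  have Htot := (Hmul.sub H2).add_const 1
  have heq : (fun p : ℝ × ℝ =>
      (exp p.1 + exp (-p.1 ^ 2)) * p.2 ^ 2 * (2 - p.2 ^ 2) - exp (-p.1 ^ 2) + 1)
      = fun p : ℝ × ℝ =>
      (exp p.1 + exp (-p.1^2)) * (2*p.2^2 - p.2^4) - exp (-p.1^2) + 1 := by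
    funext p; ring
  rw [heq]
  refine Htot.congr_fderiv ?_
  ext <;> simp [Lmap] <;> ring_nf

theorem stmt_1 (f : ℝ × ℝ → ℝ)
    (hf : ∀ x y : ℝ, f (x, y) =
      (Real.exp x + Real.exp (-x ^ 2)) * y ^ 2 * (2 - y ^ 2) - Real.exp (-x ^ 2) + 1) :
    Differentiable ℝ f ∧ ∀ p : ℝ × ℝ, fderiv ℝ f p = 0 ↔ p = (0, 0) := by
  have hfe : f = fun p : ℝ × ℝ =>
      (exp p.1 + exp (-p.1 ^ 2)) * p.2 ^ 2 * (2 - p.2 ^ 2) - exp (-p.1 ^ 2) + 1 := by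
    funext p
    rcases p with ⟨x, y⟩
    exact hf x y
  have hF : ∀ x y : ℝ, HasFDerivAt f (Lmap x y) (x, y) := by
    intro x y; rw [hfe]; exact key x y
  constructor
  · intro p
    rcases p with ⟨x, y⟩
    exact (hF x y).differentiableAt
  · rintro ⟨x, y⟩
    rw [(hF x y).fderiv]
    constructor
    · intro h
      have hA : ((exp x - 2*x*exp (-x^2)) * (2*y^2 - y^4) + 2*x*exp (-x^2)) = 0 := by
        have := congrArg (fun L : ℝ × ℝ →L[ℝ] ℝ => L (1, 0)) h
        simpa [Lmap] using this
      have hB : ((exp x + exp (-x^2)) * (4*y - 4*y^3)) = 0 := by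
        have := congrArg (fun L : ℝ × ℝ →L[ℝ] ℝ => L (0, 1)) h
        simpa [Lmap] using this
      have hpos : (0:ℝ) < exp x + exp (-x^2) := by positivity
      have hy : 4*y - 4*y^3 = 0 := by
        rcases mul_eq_zero.mp hB with h' | h'
        · exact absurd h' (ne_of_gt hpos)
        · exact h'
      have hy' : y = 0 ∨ y = 1 ∨ y = -1 := by
        have : 4 * y * (1 - y) * (1 + y) = 0 := by linear_combination hy
        rcases mul_eq_zero.mp this with h' | h'
        · rcases mul_eq_zero.mp h' with h'' | h''
          · left; linarith
          · right; left; linarith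
        · right; right; linarith
      rcases hy' with rfl | rfl | rfl
      · have : 2*x*exp (-x^2) = 0 := by
          simpa using hA
        have hx : x = 0 := by
          rcases mul_eq_zero.mp this with h' | h'
          · rcases mul_eq_zero.mp h' with h'' | h''
            · norm_num at h''
            · exact h''
          · exact absurd h' (Real.exp_ne_zero _)
        simp [hx]
      · exfalso
        have : exp x = 0 := by linear_combination hA
        exact Real.exp_ne_zero x this
      · exfalso
        have : exp x = 0 := by linear_combination hA
        exact Real.exp_ne_zero x this
    · rintro h
      injection h with h1 h2
      subst h1; subst h2
      unfold Lmap
      norm_num
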